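/- arXiv:2107.08324 — 2 statements merged into one kernel-verified Lean document; each statement's English description precedes it below -/
import Mathlib

section
/- Any coherent linear order on a finite poset (S, ≺) can be transformed into any other coherent linear order on (S, ≺) by a sequence of adjacent transpositions such that every intermediate linear order in the sequence is coherent with ≺. -/
open Classical

section Aux
variable {S : Type*} [Finite S]

omit [Finite S] in
private lemma sto_asymm' {lt : S → S → Prop} (h : IsStrictTotalOrder S lt)
    {a b : S} (hab : lt a b) : ¬ lt b a := fun hba => h.irrefl a (h.trans _ _ _ hab hba)

omit [Finite S] in
private lemma swapRel_sto' {lt : S → S → Prop} (h : IsStrictTotalOrder S lt)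
    {u v : S} (huv : lt u v) (hadj : ¬ ∃ w, lt u w ∧ lt w v) :
    IsStrictTotalOrder S (fun a b => (a = v ∧ b = u) ∨ (lt a b ∧ ¬(a = u ∧ b = v))) := by
  have irr : ∀ a, ¬ lt a a := fun a => h.irrefl a
  have hne : u ≠ v := fun e => irr u (e ▸ huv)
  refine { trichotomous := ?_, irrefl := ?_, trans := ?_ }
  · intro a b; refine fun n1 n2 => ((?_ : _ ∨ a = b ∨ _).resolve_left n1).resolve_right n2
    by_cases hab : a = b
    · exact Or.inr (Or.inl hab)
    by_cases h1 : a = u ∧ b = v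
    · exact Or.inr (Or.inr (Or.inl ⟨h1.2, h1.1⟩))
    by_cases h2 : a = v ∧ b = u
    · exact Or.inl (Or.inl h2)
    rcases @trichotomous_of S lt h.toTrichotomous a b with hl | he | hl
    · exact Or.inl (Or.inr ⟨hl, h1⟩)
    · exact Or.inr (Or.inl he)
    · refine Or.inr (Or.inr (Or.inr ⟨hl, ?_⟩))
      rintro ⟨rfl, rfl⟩; exact h2 ⟨rfl, rfl⟩
  · rintro a (⟨ha, ha'⟩ | ⟨hl, -⟩)
    · exact hne (ha'.symm.trans ha)
    · exact irr a hl
  · rintro a b c (⟨ha, hb⟩ | ⟨hab, hab'⟩) (⟨hb2, hc⟩ | ⟨hbc, hbc'⟩)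
    · exact absurd (hb.symm.trans hb2) hne
    · -- a = v, b = u, lt b c
      have hcv : c ≠ v := fun e => hbc' ⟨hb, e⟩
      have hbc2 : lt u c := by rw [hb] at hbc; exact hbc
      rcases @trichotomous_of S lt h.toTrichotomous v c with hl | he | hl
      · refine Or.inr ⟨by rw [ha]; exact hl, fun e => hne (e.1.symm.trans ha)⟩
      · exact absurd he.symm hcv
      · exact absurd ⟨c, hbc2, hl⟩ hadj
    · -- lt a b, b = v, c = u
      have hau : a ≠ u := fun e => hab' ⟨e, hb2⟩
      have hav2 : lt a v := by rw [hb2] at hab; exact hab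
      rcases @trichotomous_of S lt h.toTrichotomous a u with hl | he | hl
      · refine Or.inr ⟨by rw [hc]; exact hl, fun e => hau e.1⟩
      · exact absurd he hau
      · exact absurd ⟨a, hl, hav2⟩ hadj
    · refine Or.inr ⟨h.trans _ _ _ hab hbc, ?_⟩
      rintro ⟨rfl, rfl⟩
      exact hadj ⟨b, hab, hbc⟩

/-- Between any inversion pair there is an adjacent inversion pair. -/
private lemma exists_adj_inversion {lt lt' : S → S → Prop}
    (h : IsStrictTotalOrder S lt) (h' : IsStrictTotalOrder S lt') :
    ∀ n (a b : S), lt a b → lt' b a →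
      Set.ncard {w | lt a w ∧ lt w b} ≤ n →
      ∃ u v, lt u v ∧ lt' v u ∧ ¬ ∃ w, lt u w ∧ lt w v := by
  intro n
  induction n with
  | zero =>
    intro a b hab hba hcard
    refine ⟨a, b, hab, hba, ?_⟩
    have he : {w | lt a w ∧ lt w b} = ∅ :=
      Set.ncard_eq_zero (Set.toFinite _) |>.mp (Nat.le_zero.mp hcard)
    intro ⟨w, hw⟩
    exact absurd he (Set.nonempty_iff_ne_empty.mp ⟨w, hw⟩)
  | succ n ih =>
    intro a b hab hba hcard
    by_cases hemp : ∃ w, lt a w ∧ lt w b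
    · obtain ⟨w, haw, hwb⟩ := hemp
      have hwmem : w ∈ {x | lt a x ∧ lt x b} := ⟨haw, hwb⟩
      have hwb' : w ≠ b := fun e => h.irrefl w (e ▸ hwb)
      rcases @trichotomous_of S lt' h'.toTrichotomous b w with hl | he | hl
      · have hsub : {x | lt w x ∧ lt x b} ⊆ {x | lt a x ∧ lt x b} \ {w} := by
          rintro x ⟨hwx, hxb⟩
          exact ⟨⟨h.trans _ _ _ haw hwx, hxb⟩, fun e => h.irrefl w (e ▸ hwx)⟩
        have : Set.ncard {x | lt w x ∧ lt x b} ≤ n := by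
          calc Set.ncard {x | lt w x ∧ lt x b}
              ≤ Set.ncard ({x | lt a x ∧ lt x b} \ {w}) :=
                Set.ncard_le_ncard hsub (Set.toFinite _)
            _ = Set.ncard {x | lt a x ∧ lt x b} - 1 :=
                Set.ncard_diff_singleton_of_mem hwmem
            _ ≤ n := by omega
        exact ih w b hwb hl this
      · exact absurd he.symm hwb'
      · have hwa : lt' w a := h'.trans _ _ _ hl hba
        have hsub : {x | lt a x ∧ lt x w} ⊆ {x | lt a x ∧ lt x b} \ {w} := by
          rintro x ⟨hax, hxw⟩
          exact ⟨⟨hax, h.trans _ _ _ hxw hwb⟩, fun e => h.irrefl w (e ▸ hxw)⟩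
        have : Set.ncard {x | lt a x ∧ lt x w} ≤ n := by
          calc Set.ncard {x | lt a x ∧ lt x w}
              ≤ Set.ncard ({x | lt a x ∧ lt x b} \ {w}) :=
                Set.ncard_le_ncard hsub (Set.toFinite _)
            _ = Set.ncard {x | lt a x ∧ lt x b} - 1 :=
                Set.ncard_diff_singleton_of_mem hwmem
            _ ≤ n := by omega
        exact ih a w haw hwa this
    · exact ⟨a, b, hab, hba, hemp⟩

private lemma chain_lemma (prec lt' : S → S → Prop)
    (hlt' : IsStrictTotalOrder S lt') (hcoh' : ∀ a b, prec a b → lt' a b) :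
    ∀ n (lt : S → S → Prop), IsStrictTotalOrder S lt → (∀ a b, prec a b → lt a b) →
      Set.ncard {p : S × S | lt p.1 p.2 ∧ lt' p.2 p.1} ≤ n →
      ∃ (k : ℕ) (L : ℕ → S → S → Prop),
        (∀ a b, L 0 a b ↔ lt a b) ∧
        (∀ a b, L k a b ↔ lt' a b) ∧
        (∀ i ≤ k, IsStrictTotalOrder S (L i)) ∧
        (∀ i ≤ k, ∀ a b, prec a b → L i a b) ∧
        (∀ i < k, ∃ u v,
          L i u v ∧ (¬ ∃ w, L i u w ∧ L i w v) ∧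
          (∀ a b, L (i+1) a b ↔ ((a = v ∧ b = u) ∨ (L i a b ∧ ¬(a = u ∧ b = v))))) := by
  intro n
  induction n with
  | zero =>
    intro lt hlt hcoh hcard
    -- no inversions: lt = lt'
    have hinv : ∀ a b, ¬ (lt a b ∧ lt' b a) := by
      intro a b hab
      have he : {p : S × S | lt p.1 p.2 ∧ lt' p.2 p.1} = ∅ :=
        Set.ncard_eq_zero (Set.toFinite _) |>.mp (Nat.le_zero.mp hcard)
      exact absurd he (Set.nonempty_iff_ne_empty.mp ⟨(a, b), hab⟩)
    have hiff : ∀ a b, lt a b ↔ lt' a b := by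
      intro a b
      constructor
      · intro hab
        rcases @trichotomous_of S lt' hlt'.toTrichotomous a b with hl | he | hl
        · exact hl
        · exact absurd he.symm (fun e => hlt.irrefl a (e ▸ hab))
        · exact absurd ⟨hab, hl⟩ (hinv a b)
      · intro hab
        rcases @trichotomous_of S lt hlt.toTrichotomous a b with hl | he | hl
        · exact hl
        · exact absurd he.symm (fun e => hlt'.irrefl a (e ▸ hab))
        · exact absurd ⟨hl, hab⟩ (hinv b a)
    exact ⟨0, fun _ => lt, fun a b => Iff.rfl, hiff, fun i _ => hlt, fun i _ => hcoh,
      fun i hi => absurd hi (Nat.not_lt_zero i)⟩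
  | succ n ih =>
    intro lt hlt hcoh hcard
    by_cases hemp : ∃ a b, lt a b ∧ lt' b a
    · obtain ⟨a, b, hab, hba⟩ := hemp
      obtain ⟨u, v, huv, hvu, hadj⟩ :=
        exists_adj_inversion hlt hlt' (Set.ncard {w | lt a w ∧ lt w b}) a b hab hba le_rfl
      set lt2 : S → S → Prop := fun a b => (a = v ∧ b = u) ∨ (lt a b ∧ ¬(a = u ∧ b = v))
        with hlt2def
      have hlt2 : IsStrictTotalOrder S lt2 := swapRel_sto' hlt huv hadj
      have hcoh2 : ∀ a b, prec a b → lt2 a b := by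
        intro a b hp
        refine Or.inr ⟨hcoh a b hp, ?_⟩
        rintro ⟨rfl, rfl⟩
        exact sto_asymm' hlt' hvu (hcoh' a b hp)
      -- inversion count decreases
      have hsetE : {p : S × S | lt2 p.1 p.2 ∧ lt' p.2 p.1}
          = {p : S × S | lt p.1 p.2 ∧ lt' p.2 p.1} \ {(u, v)} := by
        ext ⟨p, q⟩
        simp only [Set.mem_setOf_eq, Set.mem_diff, Set.mem_singleton_iff, Prod.mk.injEq,
          hlt2def]
        constructor
        · rintro ⟨(⟨hp, hq⟩ | ⟨hpq, hne⟩), hqp⟩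
          · have : lt' u v := by rw [hp, hq] at hqp; exact hqp
            exact absurd this (sto_asymm' hlt' hvu)
          · exact ⟨⟨hpq, hqp⟩, fun ⟨e1, e2⟩ => hne ⟨e1, e2⟩⟩
        · rintro ⟨⟨hpq, hqp⟩, hne⟩
          exact ⟨Or.inr ⟨hpq, fun ⟨e1, e2⟩ => hne ⟨e1, e2⟩⟩, hqp⟩
      have hmem : (u, v) ∈ {p : S × S | lt p.1 p.2 ∧ lt' p.2 p.1} := ⟨huv, hvu⟩
      have hpos : 0 < Set.ncard {p : S × S | lt p.1 p.2 ∧ lt' p.2 p.1} :=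
        (Set.ncard_pos (Set.toFinite _)).mpr ⟨_, hmem⟩
      have hcard2 : Set.ncard {p : S × S | lt2 p.1 p.2 ∧ lt' p.2 p.1} ≤ n := by
        rw [hsetE, Set.ncard_diff_singleton_of_mem hmem]
        omega
      obtain ⟨k, L, hL0, hLk, hLsto, hLcoh, hLstep⟩ := ih lt2 hlt2 hcoh2 hcard2
      refine ⟨k + 1, fun i => Nat.rec lt (fun j _ => L j) i, fun a b => Iff.rfl, hLk, ?_, ?_, ?_⟩
      · rintro (_ | i) hi
        · exact hlt
        · exact hLsto i (Nat.succ_le_succ_iff.mp hi)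
      · rintro (_ | i) hi
        · exact hcoh
        · exact hLcoh i (Nat.succ_le_succ_iff.mp hi)
      · rintro (_ | i) hi
        · exact ⟨u, v, huv, hadj, fun a b => hL0 a b⟩
        · obtain ⟨u', v', h1, h2, h3⟩ := hLstep i (Nat.succ_lt_succ_iff.mp hi)
          exact ⟨u', v', h1, h2, h3⟩
    · -- no inversions at all; reuse the zero case by showing ncard = 0
      push_neg at hemp
      have he : {p : S × S | lt p.1 p.2 ∧ lt' p.2 p.1} = ∅ := by
        ext ⟨p, q⟩
        simp only [Set.mem_setOf_eq, Set.mem_empty_iff_false, iff_false]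
        exact fun ⟨h1, h2⟩ => hemp p q h1 h2
      exact ih lt hlt hcoh (by rw [he]; simp)

end Aux

/-- Any coherent linear order on a finite poset can be transformed into any other
coherent linear order by adjacent transpositions, with all intermediate orders
coherent. The chain is `L 0 = lt`, `L k = lt'`, each `L i` a linear order
coherent with `prec`, and `L (i+1)` obtained from `L i` by transposing one
pair adjacent in `L i`. -/
theorem stmt_2 {S : Type*} [Fintype S]
    (prec lt lt' : S → S → Prop)
    (hprec : IsStrictOrder S prec)
    (hlt : IsStrictTotalOrder S lt)
    (hlt' : IsStrictTotalOrder S lt')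
    (hcoh : ∀ a b, prec a b → lt a b)
    (hcoh' : ∀ a b, prec a b → lt' a b) :
    ∃ (k : ℕ) (L : ℕ → S → S → Prop),
      (∀ a b, L 0 a b ↔ lt a b) ∧
      (∀ a b, L k a b ↔ lt' a b) ∧
      (∀ i ≤ k, IsStrictTotalOrder S (L i)) ∧
      (∀ i ≤ k, ∀ a b, prec a b → L i a b) ∧
      (∀ i < k, ∃ u v,
        L i u v ∧ (¬ ∃ w, L i u w ∧ L i w v) ∧
        (∀ a b, L (i+1) a b ↔ ((a = v ∧ b = u) ∨ (L i a b ∧ ¬(a = u ∧ b = v))))) := by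
  exact chain_lemma prec lt' hlt' hcoh'
    (Set.ncard {p : S × S | lt p.1 p.2 ∧ lt' p.2 p.1}) lt hlt hcoh le_rfl
end

section
/- In a syntactic circuit with n input nodes, every stage S has exactly n exits; in particular, the circuit has exactly n output nodes. -/
/-- Counting elements of a subtype whose fiber lies in a set, via fiberwise cardinalities. -/
lemma fiber_card_helper {α β γ : Type*} [Fintype α] [Fintype β] [Fintype γ]
    (f : α → γ) (g : β → γ)
    (h : ∀ G : γ, Nat.card {a : α // f a = G} = Nat.card {b : β // g b = G})
    (S : Set γ) :
    Nat.card {a : α // f a ∈ S} = Nat.card {b : β // g b ∈ S} := by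
  classical
  have e1 : {a : α // f a ∈ S} ≃ Σ G : S, {a : α // f a = (G : γ)} := by
    refine Equiv.ofBijective (fun a => ⟨⟨f a.1, a.2⟩, a.1, rfl⟩) ⟨?_, ?_⟩
    · intro a b hab
      exact Subtype.ext (congrArg (fun p => p.2.1) hab)
    · rintro ⟨⟨G, hG⟩, a, ha⟩
      dsimp only at ha
      refine ⟨⟨a, ha ▸ hG⟩, ?_⟩
      refine Sigma.ext (Subtype.ext ha) ?_
      dsimp only
      subst ha
      rfl
  have e2 : {b : β // g b ∈ S} ≃ Σ G : S, {b : β // g b = (G : γ)} := by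
    refine Equiv.ofBijective (fun b => ⟨⟨g b.1, b.2⟩, b.1, rfl⟩) ⟨?_, ?_⟩
    · intro a b hab
      exact Subtype.ext (congrArg (fun p => p.2.1) hab)
    · rintro ⟨⟨G, hG⟩, b, hb⟩
      dsimp only at hb
      refine ⟨⟨b, hb ▸ hG⟩, ?_⟩
      refine Sigma.ext (Subtype.ext hb) ?_
      dsimp only
      subst hb
      rfl
  rw [Nat.card_congr e1, Nat.card_congr e2]
  have : ∀ G : S, Nat.card {a : α // f a = (G : γ)} = Nat.card {b : β // g b = (G : γ)} :=
    fun G => h G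
  simp only [Nat.card_eq_fintype_card, Fintype.card_sigma]
  exact Finset.sum_congr rfl fun G _ => by
    have := h (G : γ); simpa [Nat.card_eq_fintype_card] using this

/-- A syntactic circuit: finite sets of input nodes `In`, output nodes `Out`,
gates `Gate`; each gate has nonempty, equinumerous sets of entries and exits
(given by the fibers of `entryGate : Entry → Gate` and `exitGate : Exit → Gate`);
producers (`In ⊕ Exit`) are bound bijectively to consumers (`Entry ⊕ Out`);
the source relation (quantum sources via `Bind`, plus classical sources `csrc`)
is acyclic. Then every stage `S` (a set of gates closed under the transitive
closure of the source relation) has exactly `|In|` exits; in particular,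
`|Out| = |In|`. -/
theorem stmt_16 {In Out Gate Entry Exit : Type*}
    [Fintype In] [Fintype Out] [Fintype Gate] [Fintype Entry] [Fintype Exit]
    (entryGate : Entry → Gate) (exitGate : Exit → Gate)
    (hne : ∀ G : Gate, ∃ e : Entry, entryGate e = G)
    (harity : ∀ G : Gate,
      Nat.card {e : Entry // entryGate e = G} = Nat.card {x : Exit // exitGate x = G})
    (Bind : (In ⊕ Exit) ≃ (Entry ⊕ Out))
    (csrc : Gate → Gate → Prop)
    (src : Gate → Gate → Prop)
    (hsrc : ∀ G₁ G₂, src G₁ G₂ ↔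
      ((∃ (x : Exit) (e : Entry),
          exitGate x = G₁ ∧ Bind (Sum.inr x) = Sum.inl e ∧ entryGate e = G₂) ∨
        csrc G₁ G₂))
    (hacyc : ∀ G, ¬ Relation.TransGen src G G) :
    (∀ S : Set Gate,
        (∀ F G, Relation.TransGen src F G → G ∈ S → F ∈ S) →
        Set.ncard {p : In ⊕ Exit |
            (∀ x : Exit, p = Sum.inr x → exitGate x ∈ S) ∧
            (∀ e : Entry, Bind p = Sum.inl e → entryGate e ∉ S)} =
          Fintype.card In) ∧
      Fintype.card Out = Fintype.card In := by
  classical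
  have key : ∀ S : Set Gate,
      (∀ F G, Relation.TransGen src F G → G ∈ S → F ∈ S) →
      Set.ncard {p : In ⊕ Exit |
          (∀ x : Exit, p = Sum.inr x → exitGate x ∈ S) ∧
          (∀ e : Entry, Bind p = Sum.inl e → entryGate e ∉ S)} = Fintype.card In := by
    intro S hS
    set A : Set (In ⊕ Exit) := {p | ∀ x : Exit, p = Sum.inr x → exitGate x ∈ S} with hA
    set U : Set (In ⊕ Exit) := Bind ⁻¹' (Sum.inl '' {e : Entry | entryGate e ∈ S}) with hU
    -- U ⊆ A by closure of the stage
    have hUA : U ⊆ A := by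
      rintro p hp
      obtain ⟨e, he, hbe⟩ := hp
      rintro x rfl
      exact hS _ _ (Relation.TransGen.single
        ((hsrc _ _).2 (Or.inl ⟨x, e, rfl, hbe.symm, rfl⟩))) he
    -- the target set is A \ U
    have hT : {p : In ⊕ Exit |
          (∀ x : Exit, p = Sum.inr x → exitGate x ∈ S) ∧
          (∀ e : Entry, Bind p = Sum.inl e → entryGate e ∉ S)} = A \ U := by
      ext p
      simp only [Set.mem_setOf_eq, Set.mem_diff, hA, hU, Set.mem_preimage, Set.mem_image]
      constructor
      · rintro ⟨h1, h2⟩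
        exact ⟨h1, fun ⟨e, he, hbe⟩ => h2 e hbe.symm he⟩
      · rintro ⟨h1, h2⟩
        exact ⟨h1, fun e hbe he => h2 ⟨e, he, hbe.symm⟩⟩
    -- cardinality of U
    have hcardU : U.ncard = Nat.card {e : Entry // entryGate e ∈ S} := by
      rw [hU, ← Equiv.image_symm_eq_preimage,
        Set.ncard_image_of_injective _ Bind.symm.injective,
        Set.ncard_image_of_injective _ Sum.inl_injective,
        ← Nat.card_coe_set_eq]
      rfl
    -- cardinality of A
    have hcardA : A.ncard = Fintype.card In + Nat.card {x : Exit // exitGate x ∈ S} := by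
      have hAeq : A = Set.range Sum.inl ∪ Sum.inr '' {x : Exit | exitGate x ∈ S} := by
        ext p
        cases p with
        | inl i => simp [hA]
        | inr x => simp [hA]
      rw [hAeq, Set.ncard_union_eq (by
          rw [Set.disjoint_iff_forall_ne]
          rintro p ⟨i, rfl⟩ q ⟨x, hx, rfl⟩
          simp)]
      congr 1
      · rw [← Nat.card_coe_set_eq, Nat.card_range_of_injective Sum.inl_injective,
          Nat.card_eq_fintype_card]
      · rw [Set.ncard_image_of_injective _ Sum.inr_injective, ← Nat.card_coe_set_eq]
        rfl
    have hE : Nat.card {e : Entry // entryGate e ∈ S} = Nat.card {x : Exit // exitGate x ∈ S} :=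
      fiber_card_helper entryGate exitGate harity S
    rw [hT, Set.ncard_diff hUA, hcardU, hcardA, hE, Nat.add_sub_cancel]
  refine ⟨key, ?_⟩
  have h := key Set.univ (fun _ _ _ _ => Set.mem_univ _)
  have hset : {p : In ⊕ Exit |
      (∀ x : Exit, p = Sum.inr x → exitGate x ∈ Set.univ) ∧
      (∀ e : Entry, Bind p = Sum.inl e → entryGate e ∉ Set.univ)} =
      Bind ⁻¹' (Set.range Sum.inr) := by
    ext p
    simp only [Set.mem_setOf_eq, Set.mem_univ, Set.mem_preimage]
    constructor
    · rintro ⟨-, h2⟩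
      cases hb : Bind p with
      | inl e => exact absurd trivial (h2 e hb)
      | inr o => exact ⟨o, rfl⟩
    · rintro ⟨o, ho⟩
      refine ⟨fun _ _ => trivial, fun e hbe => ?_⟩
      rw [hbe] at ho
      exact absurd ho (by simp)
  rw [hset] at h
  rw [← h, ← Equiv.image_symm_eq_preimage,
    Set.ncard_image_of_injective _ Bind.symm.injective,
    ← Nat.card_coe_set_eq, Nat.card_range_of_injective Sum.inr_injective,
    Nat.card_eq_fintype_card]
end
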